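/- Fix any real constant t with 0 < t < √(3 + √6)/2 ≈ 1.167. Then there exist a constant K > 0 and an integer N such that for all n ≥ N, every binary (n, M, d) code with minimum distance d ≥ n/2 − t√n satisfies M ≤ K · n^{7/2}; in particular A(n, d) = O(n^{3.5}) whenever d ≥ n/2 − t√n. -/

import Mathlib

set_option maxHeartbeats 1000000

open Finset

namespace UBcert

noncomputable def sg : ZMod 2 → ℝ := fun z => if z = 0 then 1 else -1

lemma sg_pm (z : ZMod 2) : sg z = 1 ∨ sg z = -1 := by
  unfold sg; split <;> simp

noncomputable def es (n k : ℕ) (ε : Fin n → ℝ) : ℝ :=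
  ∑ w ∈ powersetCard k (univ : Finset (Fin n)), ∏ i ∈ w, ε i

lemma es_zero (n : ℕ) (ε : Fin n → ℝ) : es n 0 ε = 1 := by
  simp [es]

lemma es_one (n : ℕ) (ε : Fin n → ℝ) : es n 1 ε = ∑ i, ε i := by
  simp [es, powersetCard_one, Finset.sum_map]

lemma es_rec (n m : ℕ) (hmn : m + 2 ≤ n) (ε : Fin n → ℝ)
    (hε : ∀ i, ε i = 1 ∨ ε i = -1) :
    (∑ i, ε i) * es n (m+1) ε
      = (m+2 : ℝ) * es n (m+2) ε + ((n : ℝ) - m) * es n m ε := by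
  have hsq : ∀ i, ε i * ε i = 1 := by
    intro i; rcases hε i with h | h <;> rw [h] <;> norm_num
  have expand : (∑ i, ε i) * es n (m+1) ε
      = ∑ w ∈ powersetCard (m+1) (univ : Finset (Fin n)),
          ∑ i : Fin n, ε i * ∏ j ∈ w, ε j := by
    rw [es, Finset.sum_comm, Finset.sum_mul]
    congr 1; ext i
    rw [Finset.mul_sum]
  have split : ∀ w ∈ powersetCard (m+1) (univ : Finset (Fin n)),
      (∑ i : Fin n, ε i * ∏ j ∈ w, ε j)
        = (∑ i ∈ w, ∏ j ∈ w.erase i, ε j)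
          + ∑ i ∈ (univ : Finset (Fin n)) \ w, ∏ j ∈ insert i w, ε j := by
    intro w hw
    rw [mem_powersetCard] at hw
    have h1 : ∀ i ∈ w, ε i * ∏ j ∈ w, ε j = ∏ j ∈ w.erase i, ε j := by
      intro i hi
      rw [← Finset.mul_prod_erase w ε hi, ← mul_assoc, hsq i, one_mul]
    have h2 : ∀ i ∈ (univ : Finset (Fin n)) \ w,
        ε i * ∏ j ∈ w, ε j = ∏ j ∈ insert i w, ε j := by
      intro i hi
      rw [mem_sdiff] at hi
      rw [Finset.prod_insert hi.2]
    rw [← Finset.sum_sdiff (subset_univ w)]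
    rw [Finset.sum_congr rfl h2, Finset.sum_congr rfl h1]
    ring
  rw [expand, Finset.sum_congr rfl split, Finset.sum_add_distrib]
  have Sin : (∑ w ∈ powersetCard (m+1) (univ : Finset (Fin n)),
      ∑ i ∈ w, ∏ j ∈ w.erase i, ε j) = ((n : ℝ) - m) * es n m ε := by
    have count : ((n : ℝ) - m) * es n m ε
        = ∑ v ∈ powersetCard m (univ : Finset (Fin n)),
            ∑ _i ∈ (univ : Finset (Fin n)) \ v, ∏ j ∈ v, ε j := by
      rw [es, Finset.mul_sum]
      refine Finset.sum_congr rfl ?_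
      intro v hv
      rw [mem_powersetCard] at hv
      rw [Finset.sum_const, card_sdiff_of_subset (subset_univ v), card_univ,
        Fintype.card_fin, hv.2, nsmul_eq_mul, Nat.cast_sub (by omega)]
    rw [count,
      Finset.sum_sigma' (powersetCard (m+1) (univ : Finset (Fin n))) _
        (fun w i => ∏ j ∈ w.erase i, ε j),
      Finset.sum_sigma' (powersetCard m (univ : Finset (Fin n))) _
        (fun v _ => ∏ j ∈ v, ε j)]
    refine Finset.sum_nbij' (fun x => ⟨x.1.erase x.2, x.2⟩)
      (fun x => ⟨insert x.2 x.1, x.2⟩) ?_ ?_ ?_ ?_ ?_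
    · rintro ⟨w, i⟩ hx
      rw [Finset.mem_sigma, mem_powersetCard] at hx ⊢
      refine ⟨⟨Finset.Subset.trans (erase_subset _ _) hx.1.1, ?_⟩, ?_⟩
      · rw [card_erase_of_mem hx.2, hx.1.2]; omega
      · simp [Finset.mem_sdiff, Finset.notMem_erase]
    · rintro ⟨v, i⟩ hx
      rw [Finset.mem_sigma, mem_powersetCard] at hx ⊢
      have hiv : i ∉ v := (mem_sdiff.mp hx.2).2
      exact ⟨⟨subset_univ _, by rw [card_insert_of_notMem hiv, hx.1.2]⟩,
        mem_insert_self _ _⟩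
    · rintro ⟨w, i⟩ hx
      rw [Finset.mem_sigma] at hx
      simp only [Sigma.mk.inj_iff, heq_eq_eq]
      exact ⟨insert_erase hx.2, trivial⟩
    · rintro ⟨v, i⟩ hx
      rw [Finset.mem_sigma] at hx
      have hiv : i ∉ v := (mem_sdiff.mp hx.2).2
      simp only [Sigma.mk.inj_iff, heq_eq_eq]
      exact ⟨erase_insert hiv, trivial⟩
    · rintro ⟨w, i⟩ _; rfl
  have Sout : (∑ w ∈ powersetCard (m+1) (univ : Finset (Fin n)),
      ∑ i ∈ (univ : Finset (Fin n)) \ w, ∏ j ∈ insert i w, ε j)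
      = (m+2 : ℝ) * es n (m+2) ε := by
    have count : (m+2 : ℝ) * es n (m+2) ε
        = ∑ v ∈ powersetCard (m+2) (univ : Finset (Fin n)),
            ∑ _i ∈ v, ∏ j ∈ v, ε j := by
      rw [es, Finset.mul_sum]
      refine Finset.sum_congr rfl ?_
      intro v hv
      rw [mem_powersetCard] at hv
      rw [Finset.sum_const, hv.2, nsmul_eq_mul]
      push_cast; ring
    rw [count,
      Finset.sum_sigma' (powersetCard (m+1) (univ : Finset (Fin n))) _
        (fun w i => ∏ j ∈ insert i w, ε j),
      Finset.sum_sigma' (powersetCard (m+2) (univ : Finset (Fin n))) _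
        (fun v _ => ∏ j ∈ v, ε j)]
    refine Finset.sum_nbij' (fun x => ⟨insert x.2 x.1, x.2⟩)
      (fun x => ⟨x.1.erase x.2, x.2⟩) ?_ ?_ ?_ ?_ ?_
    · rintro ⟨w, i⟩ hx
      rw [Finset.mem_sigma, mem_powersetCard] at hx ⊢
      have hiw : i ∉ w := (mem_sdiff.mp hx.2).2
      exact ⟨⟨subset_univ _, by rw [card_insert_of_notMem hiw, hx.1.2]⟩,
        mem_insert_self _ _⟩
    · rintro ⟨v, i⟩ hx
      rw [Finset.mem_sigma, mem_powersetCard] at hx ⊢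
      refine ⟨⟨Finset.Subset.trans (erase_subset _ _) hx.1.1, ?_⟩, ?_⟩
      · rw [card_erase_of_mem hx.2, hx.1.2]; omega
      · simp [Finset.mem_sdiff, Finset.notMem_erase]
    · rintro ⟨w, i⟩ hx
      rw [Finset.mem_sigma] at hx
      have hiw : i ∉ w := (mem_sdiff.mp hx.2).2
      simp only [Sigma.mk.inj_iff, heq_eq_eq]
      exact ⟨erase_insert hiw, trivial⟩
    · rintro ⟨v, i⟩ hx
      rw [Finset.mem_sigma] at hx
      simp only [Sigma.mk.inj_iff, heq_eq_eq]
      exact ⟨insert_erase hx.2, trivial⟩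
    · intros; rfl
  rw [Sin, Sout]; ring

noncomputable def K2 (nn a : ℝ) : ℝ := a^2/2 - nn/2
noncomputable def K3 (nn a : ℝ) : ℝ := a^3/6 - nn*a/2 + a/3
noncomputable def K4 (nn a : ℝ) : ℝ := a^4/24 - nn*a^2/4 + a^2/3 + nn^2/8 - nn/4
noncomputable def K5 (nn a : ℝ) : ℝ :=
  a^5/120 - nn*a^3/12 + a^3/6 + nn^2*a/8 - 5*nn*a/12 + a/5
noncomputable def K6 (nn a : ℝ) : ℝ :=
  a^6/720 - nn*a^4/48 + a^4/18 + nn^2*a^2/16 - 7*nn*a^2/24 + 23*a^2/90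
    - nn^3/48 + nn^2/8 - nn/6
noncomputable def K7 (nn a : ℝ) : ℝ :=
  a^7/5040 - nn*a^5/240 + a^5/72 + nn^2*a^3/48 - nn*a^3/8 + 7*a^3/45
    - nn^3*a/48 + nn^2*a/6 - 7*nn*a/20 + a/7

lemma es_forms (n : ℕ) (hn : 9 ≤ n) (ε : Fin n → ℝ)
    (hε : ∀ i, ε i = 1 ∨ ε i = -1) :
    es n 2 ε = K2 n (∑ i, ε i) ∧ es n 3 ε = K3 n (∑ i, ε i) ∧
    es n 4 ε = K4 n (∑ i, ε i) ∧ es n 5 ε = K5 n (∑ i, ε i) ∧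
    es n 6 ε = K6 n (∑ i, ε i) ∧ es n 7 ε = K7 n (∑ i, ε i) := by
  have r0 := es_rec n 0 (by omega) ε hε
  have r1 := es_rec n 1 (by omega) ε hε
  have r2 := es_rec n 2 (by omega) ε hε
  have r3 := es_rec n 3 (by omega) ε hε
  have r4 := es_rec n 4 (by omega) ε hε
  have r5 := es_rec n 5 (by omega) ε hε
  rw [es_zero, es_one] at r0
  rw [es_one] at r1
  norm_num at r0 r1 r2 r3 r4 r5
  set a := ∑ i, ε i with ha
  have h2 : es n 2 ε = K2 n a := by
    simp only [K2]; linear_combination (-(1:ℝ)/2) * r0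
  rw [h2] at r1
  have h3 : es n 3 ε = K3 n a := by
    simp only [K2] at r1; simp only [K3]; linear_combination (-(1:ℝ)/3) * r1
  rw [h2, h3] at r2
  have h4 : es n 4 ε = K4 n a := by
    simp only [K2, K3] at r2; simp only [K4]; linear_combination (-(1:ℝ)/4) * r2
  rw [h3, h4] at r3
  have h5 : es n 5 ε = K5 n a := by
    simp only [K3, K4] at r3; simp only [K5]; linear_combination (-(1:ℝ)/5) * r3
  rw [h4, h5] at r4
  have h6 : es n 6 ε = K6 n a := by
    simp only [K4, K5] at r4; simp only [K6]; linear_combination (-(1:ℝ)/6) * r4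
  rw [h5, h6] at r5
  have h7 : es n 7 ε = K7 n a := by
    simp only [K5, K6] at r5; simp only [K7]; linear_combination (-(1:ℝ)/7) * r5
  exact ⟨h2, h3, h4, h5, h6, h7⟩

lemma T_nonneg (n k : ℕ) (C : Finset (Fin n → ZMod 2)) :
    0 ≤ ∑ x ∈ C, ∑ y ∈ C, es n k (fun i => sg (x i) * sg (y i)) := by
  have key : ∑ x ∈ C, ∑ y ∈ C, es n k (fun i => sg (x i) * sg (y i))
      = ∑ w ∈ powersetCard k (univ : Finset (Fin n)),
          (∑ x ∈ C, ∏ i ∈ w, sg (x i))^2 := by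
    have h1 : ∀ x ∈ C, ∑ y ∈ C, es n k (fun i => sg (x i) * sg (y i))
        = ∑ w ∈ powersetCard k (univ : Finset (Fin n)),
            ((∏ i ∈ w, sg (x i)) * ∑ y ∈ C, ∏ i ∈ w, sg (y i)) := by
      intro x _
      simp only [es, Finset.prod_mul_distrib]
      rw [Finset.sum_comm]
      refine Finset.sum_congr rfl ?_
      intro w _
      rw [Finset.mul_sum]
    rw [Finset.sum_congr rfl h1, Finset.sum_comm]
    refine Finset.sum_congr rfl ?_
    intro w _
    rw [← Finset.sum_mul, sq]
  rw [key]
  exact Finset.sum_nonneg fun w _ => sq_nonneg _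

lemma sg_mul (z w : ZMod 2) : sg z * sg w = if z = w then 1 else -1 := by
  fin_cases z <;> fin_cases w <;> simp [sg] <;> split_ifs <;> simp_all <;> contradiction

lemma sum_sg (n : ℕ) (x y : Fin n → ZMod 2) :
    ∑ i, sg (x i) * sg (y i) = (n : ℝ) - 2 * hammingDist x y := by
  have hd : hammingDist x y = #(Finset.univ.filter fun i => x i ≠ y i) := rfl
  have : ∑ i, sg (x i) * sg (y i)
      = ∑ i : Fin n, (1 - 2 * if x i ≠ y i then (1:ℝ) else 0) := by
    refine Finset.sum_congr rfl ?_
    intro i _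
    rw [sg_mul]
    by_cases h : x i = y i <;> simp [h] <;> norm_num
  rw [this, Finset.sum_sub_distrib, Finset.sum_const, ← Finset.mul_sum,
    Finset.sum_boole]
  simp only [hd]
  push_cast [card_univ, Fintype.card_fin]
  ring

noncomputable def c0 (s u : ℝ) : ℝ := (-6:ℝ)*s^7*u^7 + (54:ℝ)*s^5*u^7 + (-126:ℝ)*s^3*u^7 + (54:ℝ)*s^1*u^7 + (18:ℝ)*s^7*u^5 + (-198:ℝ)*s^5*u^5 + (486:ℝ)*s^3*u^5 + (-234:ℝ)*s^1*u^5 + (-16:ℝ)*s^7*u^3 + (192:ℝ)*s^5*u^3 + (-528:ℝ)*s^3*u^3 + (288:ℝ)*s^1*u^3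
noncomputable def c1 (s u : ℝ) : ℝ := (6:ℝ)*s^6*u^6 + (-18:ℝ)*s^4*u^6 + (54:ℝ)*s^2*u^6 + (54:ℝ)*u^6 + (-126:ℝ)*s^6*u^4 + (594:ℝ)*s^4*u^4 + (-882:ℝ)*s^2*u^4 + (-162:ℝ)*u^4 + (396:ℝ)*s^6*u^2 + (-2232:ℝ)*s^4*u^2 + (3276:ℝ)*s^2*u^2 + (144:ℝ)*u^2 + (-272:ℝ)*s^6 + (1632:ℝ)*s^4 + (-2448:ℝ)*s^2
noncomputable def c2 (s u : ℝ) : ℝ := (-36:ℝ)*s^7*u^5 + (360:ℝ)*s^5*u^5 + (-828:ℝ)*s^3*u^5 + (432:ℝ)*s^1*u^5 + (204:ℝ)*s^7*u^3 + (-2304:ℝ)*s^5*u^3 + (5868:ℝ)*s^3*u^3 + (-2952:ℝ)*s^1*u^3 + (-272:ℝ)*s^7*u^1 + (3264:ℝ)*s^5*u^1 + (-8976:ℝ)*s^3*u^1 + (4896:ℝ)*s^1*u^1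
noncomputable def c3 (s u : ℝ) : ℝ := (108:ℝ)*s^6*u^4 + (-432:ℝ)*s^4*u^4 + (756:ℝ)*s^2*u^4 + (216:ℝ)*u^4 + (-1500:ℝ)*s^6*u^2 + (7920:ℝ)*s^4*u^2 + (-11340:ℝ)*s^2*u^2 + (-1080:ℝ)*u^2 + (3696:ℝ)*s^6 + (-22176:ℝ)*s^4 + (33264:ℝ)*s^2
noncomputable def c4 (s u : ℝ) : ℝ := (-216:ℝ)*s^7*u^3 + (2376:ℝ)*s^5*u^3 + (-5832:ℝ)*s^3*u^3 + (2808:ℝ)*s^1*u^3 + (960:ℝ)*s^7*u^1 + (-11520:ℝ)*s^5*u^1 + (31680:ℝ)*s^3*u^1 + (-17280:ℝ)*s^1*u^1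
noncomputable def c5 (s u : ℝ) : ℝ := (1080:ℝ)*s^6*u^2 + (-5400:ℝ)*s^4*u^2 + (7560:ℝ)*s^2*u^2 + (1080:ℝ)*u^2 + (-8400:ℝ)*s^6 + (50400:ℝ)*s^4 + (-75600:ℝ)*s^2
noncomputable def c6 (s u : ℝ) : ℝ := (-720:ℝ)*s^7*u^1 + (8640:ℝ)*s^5*u^1 + (-23760:ℝ)*s^3*u^1 + (12960:ℝ)*s^1*u^1
noncomputable def c7 (s u : ℝ) : ℝ := (5040:ℝ)*s^6 + (-30240:ℝ)*s^4 + (45360:ℝ)*s^2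


noncomputable def Rp (s u a : ℝ) : ℝ :=
  (s^3 - 3*s)*a^3 + 3*(s^2-1)*u*a^2 - 3*s*(s^2-5)*u^2*a + 3*(3-s^2)*u^3

lemma cert_identity (s u a : ℝ) :
    c0 s u + c1 s u * a + c2 s u * K2 (u^2) a + c3 s u * K3 (u^2) a
      + c4 s u * K4 (u^2) a + c5 s u * K5 (u^2) a + c6 s u * K6 (u^2) a
      + c7 s u * K7 (u^2) a
    = (a - s*u) * (Rp s u a)^2 := by
  simp only [c0, c1, c2, c3, c4, c5, c6, c7, K2, K3, K4, K5, K6, K7, Rp]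
  ring

section ineq
variable {s u δ : ℝ}
variable (hs2 : 2 ≤ s) (hs : s ≤ 2.34) (hy5 : s^2 ≤ 5.4495)
variable (hδ : δ = 3 + Real.sqrt 6 - s^2) (hδpos : 0 < δ) (hδle : δ ≤ 1.45)
variable (hu : 262 ≤ u) (huδ : 100000 ≤ δ * u^2)

include hs2 hs hy5 hu

lemma c7_nonneg : 0 ≤ c7 s u := by
  have e : c7 s u = 5040*(s*(s^2-3))^2 := by simp only [c7]; ring
  rw [e]; positivity

lemma c6_nonneg : 0 ≤ c6 s u := by
  have hy4 : (4:ℝ) ≤ s^2 := by nlinarith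
  have e : c6 s u = 720*u*s*((s^2-3)*(9*s^2 - (s^2)^2 - 6)) := by
    simp only [c6]; ring
  rw [e]
  have h1 : (0:ℝ) ≤ (s^2-3) := by nlinarith
  have h2 : (0:ℝ) ≤ 9*s^2 - (s^2)^2 - 6 := by nlinarith
  have hu0 : (0:ℝ) ≤ u := by linarith
  positivity

lemma c5_nonneg : 0 ≤ c5 s u := by
  have hy4 : (4:ℝ) ≤ s^2 := by nlinarith
  have e : c5 s u = (1080*(s^2)^3 - 5400*(s^2)^2 + 7560*s^2 + 1080)*u^2
      + (-8400*(s^2)^3 + 50400*(s^2)^2 - 75600*s^2) := by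
    simp only [c5]; ring
  have hA : (14040:ℝ) ≤ 1080*(s^2)^3 - 5400*(s^2)^2 + 7560*s^2 + 1080 := by
    nlinarith [sq_nonneg (s^2-4), sq_nonneg s]
  have hB : (-280000:ℝ) ≤ -8400*(s^2)^3 + 50400*(s^2)^2 - 75600*s^2 := by
    nlinarith [sq_nonneg (s^2-4), mul_nonneg (sub_nonneg.mpr hy4) (sub_nonneg.mpr hy5)]
  nlinarith [sq_nonneg u, mul_le_mul_of_nonneg_left (sq_nonneg (u-262)) (le_of_lt (by linarith : (0:ℝ) < 14040))]

lemma c4_nonneg : 0 ≤ c4 s u := by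
  have hy4 : (4:ℝ) ≤ s^2 := by nlinarith
  have e : c4 s u = s*u*((-216*(s^2)^3 + 2376*(s^2)^2 - 5832*s^2 + 2808)*u^2
      + (960*(s^2)^3 - 11520*(s^2)^2 + 31680*s^2 - 17280)) := by
    simp only [c4]; ring
  have hA : (3672:ℝ) ≤ -216*(s^2)^3 + 2376*(s^2)^2 - 5832*s^2 + 2808 := by
    nlinarith [mul_nonneg (sub_nonneg.mpr hy4) (sub_nonneg.mpr hy5), sq_nonneg (s^2-4)]
  have hB : (-31400:ℝ) ≤ 960*(s^2)^3 - 11520*(s^2)^2 + 31680*s^2 - 17280 := by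
    nlinarith [mul_nonneg (sub_nonneg.mpr hy4) (sub_nonneg.mpr hy5), sq_nonneg (s^2-4)]
  rw [e]
  have hbr : (0:ℝ) ≤ (-216*(s^2)^3 + 2376*(s^2)^2 - 5832*s^2 + 2808)*u^2
      + (960*(s^2)^3 - 11520*(s^2)^2 + 31680*s^2 - 17280) := by
    nlinarith [sq_nonneg (u-262)]
  have : (0:ℝ) ≤ s*u := by nlinarith
  exact mul_nonneg this hbr

lemma c3_nonneg : 0 ≤ c3 s u := by
  have hy4 : (4:ℝ) ≤ s^2 := by nlinarith
  have e : c3 s u = (108*(s^2)^3 - 432*(s^2)^2 + 756*s^2 + 216)*u^4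
      + (-1500*(s^2)^3 + 7920*(s^2)^2 - 11340*s^2 - 1080)*u^2
      + 3696*s^2*(s^2-3)^2 := by
    simp only [c3]; ring
  have hA : (3240:ℝ) ≤ 108*(s^2)^3 - 432*(s^2)^2 + 756*s^2 + 216 := by
    nlinarith [sq_nonneg (s^2-4), mul_nonneg (sub_nonneg.mpr hy4) (sub_nonneg.mpr hy5)]
  have hB : (-71000:ℝ) ≤ -1500*(s^2)^3 + 7920*(s^2)^2 - 11340*s^2 - 1080 := by
    nlinarith [sq_nonneg (s^2-4), mul_nonneg (sub_nonneg.mpr hy4) (sub_nonneg.mpr hy5)]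
  have hC : (0:ℝ) ≤ 3696*s^2*(s^2-3)^2 := by positivity
  have hv : (68644:ℝ) ≤ u^2 := by nlinarith
  have h1 : (0:ℝ) ≤ (108*(s^2)^3 - 432*(s^2)^2 + 756*s^2 + 216)*u^2
      + (-1500*(s^2)^3 + 7920*(s^2)^2 - 11340*s^2 - 1080) := by
    nlinarith [mul_le_mul hA hv (by norm_num) (by linarith)]
  nlinarith [mul_nonneg h1 (sq_nonneg u)]

lemma c2_nonneg : 0 ≤ c2 s u := by
  have hy4 : (4:ℝ) ≤ s^2 := by nlinarith
  have e : c2 s u = s*u*((-36*(s^2)^3 + 360*(s^2)^2 - 828*s^2 + 432)*u^4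
      + (204*(s^2)^3 - 2304*(s^2)^2 + 5868*s^2 - 2952)*u^2
      + (-272)*(s^2-3)*((s^2)^2-9*s^2+6)) := by
    simp only [c2]; ring
  have hA : (576:ℝ) ≤ -36*(s^2)^3 + 360*(s^2)^2 - 828*s^2 + 432 := by
    nlinarith [mul_nonneg (sub_nonneg.mpr hy4) (sub_nonneg.mpr hy5), sq_nonneg (s^2-4)]
  have hB : (-6400:ℝ) ≤ 204*(s^2)^3 - 2304*(s^2)^2 + 5868*s^2 - 2952 := by
    nlinarith [mul_nonneg (sub_nonneg.mpr hy4) (sub_nonneg.mpr hy5), sq_nonneg (s^2-4)]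
  have hC : (0:ℝ) ≤ (-272)*(s^2-3)*((s^2)^2-9*s^2+6) := by
    have h1 : (0:ℝ) ≤ (s^2-3) := by nlinarith
    have h2 : (s^2)^2-9*s^2+6 ≤ 0 := by nlinarith
    nlinarith [mul_nonneg h1 (neg_nonneg.mpr h2)]
  rw [e]
  have hbr : (0:ℝ) ≤ (-36*(s^2)^3 + 360*(s^2)^2 - 828*s^2 + 432)*u^4
      + (204*(s^2)^3 - 2304*(s^2)^2 + 5868*s^2 - 2952)*u^2
      + (-272)*(s^2-3)*((s^2)^2-9*s^2+6) := by
    have hv : (68644:ℝ) ≤ u^2 := by nlinarith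
    have h1 : (0:ℝ) ≤ (-36*(s^2)^3 + 360*(s^2)^2 - 828*s^2 + 432)*u^2
        + (204*(s^2)^3 - 2304*(s^2)^2 + 5868*s^2 - 2952) := by
      nlinarith [mul_le_mul hA hv (by norm_num) (by linarith)]
    nlinarith [mul_nonneg h1 (sq_nonneg u), hC]
  have hsu : (0:ℝ) ≤ s*u := by nlinarith
  exact mul_nonneg hsu hbr

lemma c1_nonneg : 0 ≤ c1 s u := by
  have hy4 : (4:ℝ) ≤ s^2 := by nlinarith
  have e : c1 s u = (6*(s^2)^3 - 18*(s^2)^2 + 54*s^2 + 54)*u^6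
      + (-126*(s^2)^3 + 594*(s^2)^2 - 882*s^2 - 162)*u^4
      + (396*(s^2)^3 - 2232*(s^2)^2 + 3276*s^2 + 144)*u^2
      + (-272)*s^2*(s^2-3)^2 := by
    simp only [c1]; ring
  have hA : (366:ℝ) ≤ 6*(s^2)^3 - 18*(s^2)^2 + 54*s^2 + 54 := by
    nlinarith [sq_nonneg (s^2-4), mul_nonneg (sub_nonneg.mpr hy4) (sub_nonneg.mpr hy5)]
  have hB : (-7720:ℝ) ≤ -126*(s^2)^3 + 594*(s^2)^2 - 882*s^2 - 162 := by
    nlinarith [sq_nonneg (s^2-4), mul_nonneg (sub_nonneg.mpr hy4) (sub_nonneg.mpr hy5)]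
  have hC : (2880:ℝ) ≤ 396*(s^2)^3 - 2232*(s^2)^2 + 3276*s^2 + 144 := by
    nlinarith [sq_nonneg (s^2-4), mul_nonneg (sub_nonneg.mpr hy4) (sub_nonneg.mpr hy5)]
  have hD : (-8900:ℝ) ≤ (-272)*s^2*(s^2-3)^2 := by
    nlinarith [sq_nonneg (s^2-4), mul_nonneg (sub_nonneg.mpr hy4) (sub_nonneg.mpr hy5)]
  have hv : (68644:ℝ) ≤ u^2 := by nlinarith
  have h1 : (2000000:ℝ) ≤ (6*(s^2)^3 - 18*(s^2)^2 + 54*s^2 + 54)*u^2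
      + (-126*(s^2)^3 + 594*(s^2)^2 - 882*s^2 - 162) := by
    nlinarith [mul_le_mul hA hv (by norm_num) (by linarith)]
  have h2 : (2000000:ℝ) ≤ ((6*(s^2)^3 - 18*(s^2)^2 + 54*s^2 + 54)*u^2
      + (-126*(s^2)^3 + 594*(s^2)^2 - 882*s^2 - 162))*u^2
      + (396*(s^2)^3 - 2232*(s^2)^2 + 3276*s^2 + 144) := by
    nlinarith [mul_le_mul h1 hv (by norm_num) (by linarith)]
  nlinarith [mul_le_mul h2 hv (by norm_num) (by linarith)]

include hδ hδpos hδle huδ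

lemma c0_ge : 38*δ*u^7 ≤ c0 s u := by
  have hy4 : (4:ℝ) ≤ s^2 := by nlinarith
  have h6 : Real.sqrt 6 ^ 2 = 6 := Real.sq_sqrt (by norm_num)
  have h6lb : (2.44:ℝ) ≤ Real.sqrt 6 := by
    rw [show (2.44:ℝ) = Real.sqrt (2.44^2) from (Real.sqrt_sq (by norm_num)).symm]
    exact Real.sqrt_le_sqrt (by norm_num)
  have e : c0 s u = s*((-6*(s^2)^3+54*(s^2)^2-126*s^2+54)*u^7
      + (18*(s^2)^3-198*(s^2)^2+486*s^2-234)*u^5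
      + (-16)*(s^2-3)*((s^2)^2-9*s^2+6)*u^3) := by
    simp only [c0]; ring
  have e1 : -6*(s^2)^3+54*(s^2)^2-126*s^2+54
      = 6*(s^2-3)*(s^2-3+Real.sqrt 6)*δ := by
    rw [hδ]; linear_combination (-(6:ℝ)*(s^2-3)) * h6
  have hg1 : 20*δ ≤ -6*(s^2)^3+54*(s^2)^2-126*s^2+54 := by
    rw [e1]
    have h1 : (1:ℝ) ≤ s^2-3 := by nlinarith
    have h2 : (3.4:ℝ) ≤ s^2-3+Real.sqrt 6 := by nlinarith
    have h3 : (20.4:ℝ) ≤ 6*(s^2-3)*(s^2-3+Real.sqrt 6) := by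
      nlinarith [mul_le_mul h1 h2 (by norm_num) (by linarith)]
    have h4 := mul_le_mul_of_nonneg_right h3 (le_of_lt hδpos)
    linarith
  have hg2 : (-560:ℝ) ≤ 18*(s^2)^3-198*(s^2)^2+486*s^2-234 := by
    nlinarith [sq_nonneg (s^2-4), mul_nonneg (sub_nonneg.mpr hy4) (sub_nonneg.mpr hy5)]
  have hg3 : (0:ℝ) ≤ (-16)*(s^2-3)*((s^2)^2-9*s^2+6) := by
    have h1 : (0:ℝ) ≤ (s^2-3) := by nlinarith
    have h2 : (s^2)^2-9*s^2+6 ≤ 0 := by nlinarith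
    nlinarith [mul_nonneg h1 (neg_nonneg.mpr h2)]
  have hu0 : (0:ℝ) < u := by linarith
  have hu5 : (0:ℝ) < u^5 := by positivity
  have hu7 : (0:ℝ) < u^7 := by positivity
  have key : 20*δ*u^7 - 560*u^5 + 0 ≤ (-6*(s^2)^3+54*(s^2)^2-126*s^2+54)*u^7
      + (18*(s^2)^3-198*(s^2)^2+486*s^2-234)*u^5
      + (-16)*(s^2-3)*((s^2)^2-9*s^2+6)*u^3 := by
    have t1 := mul_le_mul_of_nonneg_right hg1 (le_of_lt hu7)
    have t2 := mul_le_mul_of_nonneg_right hg2 (le_of_lt hu5)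
    have t3 : (0:ℝ) ≤ (-16)*(s^2-3)*((s^2)^2-9*s^2+6)*u^3 := by
      exact mul_nonneg hg3 (by positivity)
    linarith
  have hslack : 560*u^5 ≤ δ*u^7 := by
    have h1 : (560:ℝ) ≤ δ*u^2 := by linarith
    have h2 : δ*u^7 = (δ*u^2)*u^5 := by ring
    rw [h2]
    exact mul_le_mul_of_nonneg_right h1 (le_of_lt hu5)
  set B := (-6*(s^2)^3+54*(s^2)^2-126*s^2+54)*u^7
      + (18*(s^2)^3-198*(s^2)^2+486*s^2-234)*u^5
      + (-16)*(s^2-3)*((s^2)^2-9*s^2+6)*u^3 with hBdef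
  have hB19 : 19*δ*u^7 ≤ B := by
    have : 20*δ*u^7 - 560*u^5 + 0 ≤ B := key
    linarith
  have hBpos : (0:ℝ) ≤ B := by nlinarith [hδpos, hu7]
  rw [e]
  have h2B : 2*B ≤ s*B := mul_le_mul_of_nonneg_right hs2 hBpos
  linarith

lemma diag_le : (u^2 - s*u) * (Rp s u (u^2))^2 ≤ 36*u^14 := by
  have hy4 : (4:ℝ) ≤ s^2 := by nlinarith
  have hR : Rp s u (u^2) = (s^3-3*s)*u^6 + 3*(s^2-1)*u^5
      + (-3*s*(s^2-5))*u^4 + 3*(3-s^2)*u^3 := by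
    simp only [Rp]; ring
  have hu0 : (0:ℝ) < u := by linarith
  have hub : Rp s u (u^2) ≤ 6*u^6 := by
    rw [hR]
    have b1 : s^3-3*s ≤ 5.8 := by nlinarith
    have b2 : 3*(s^2-1) ≤ 13.35 := by nlinarith
    have b3 : -3*s*(s^2-5) ≤ 7.1 := by nlinarith
    have b4 : 3*(3-s^2) ≤ 0 := by nlinarith
    nlinarith [pow_pos hu0 6, pow_pos hu0 5, pow_pos hu0 4, pow_pos hu0 3,
      mul_le_mul_of_nonneg_right b1 (le_of_lt (pow_pos hu0 6)),
      mul_le_mul_of_nonneg_right b2 (le_of_lt (pow_pos hu0 5)),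
      mul_le_mul_of_nonneg_right b3 (le_of_lt (pow_pos hu0 4)),
      mul_le_mul_of_nonneg_right b4 (le_of_lt (pow_pos hu0 3)),
      mul_le_mul_of_nonneg_right (by nlinarith : (13.35:ℝ) ≤ 0.1*u) (le_of_lt (pow_pos hu0 5)),
      mul_le_mul_of_nonneg_right (by nlinarith : (7.1:ℝ) ≤ 0.1*u^2) (le_of_lt (pow_pos hu0 4))]
  have hlb : -(6*u^6) ≤ Rp s u (u^2) := by
    rw [hR]
    have b1 : (2:ℝ) ≤ s^3-3*s := by nlinarith
    have b2 : (0:ℝ) ≤ 3*(s^2-1) := by nlinarith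
    have b3 : (-7.1:ℝ) ≤ -3*s*(s^2-5) := by nlinarith
    have b4 : (-7.35:ℝ) ≤ 3*(3-s^2) := by nlinarith
    nlinarith [pow_pos hu0 6, pow_pos hu0 5, pow_pos hu0 4, pow_pos hu0 3,
      mul_le_mul_of_nonneg_right b1 (le_of_lt (pow_pos hu0 6)),
      mul_le_mul_of_nonneg_right b3 (le_of_lt (pow_pos hu0 4)),
      mul_le_mul_of_nonneg_right b4 (le_of_lt (pow_pos hu0 3)),
      mul_nonneg (le_of_lt (pow_pos hu0 5)) (by linarith : (0:ℝ) ≤ 3*(s^2-1)),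
      mul_le_mul_of_nonneg_right (by nlinarith : (7.1:ℝ) ≤ u^2) (le_of_lt (pow_pos hu0 4)),
      mul_le_mul_of_nonneg_right (by nlinarith : (7.35:ℝ) ≤ u^3) (le_of_lt (pow_pos hu0 3))]
  have hsq : (Rp s u (u^2))^2 ≤ 36*u^12 := by
    have := sq_le_sq' hlb hub
    calc (Rp s u (u^2))^2 ≤ (6*u^6)^2 := this
    _ = 36*u^12 := by ring
  have hfac : (0:ℝ) ≤ u^2 - s*u := by nlinarith
  have hfac2 : u^2 - s*u ≤ u^2 := by nlinarith
  calc (u^2 - s*u) * (Rp s u (u^2))^2 ≤ u^2 * (36*u^12) := by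
        exact mul_le_mul hfac2 hsq (sq_nonneg _) (sq_nonneg u)
  _ = 36*u^14 := by ring

end ineq

end UBcert


/-- For any fixed `0 < t < √(3+√6)/2`, codes with minimum distance `d ≥ n/2 - t√n`
have size `O(n^{7/2})`. -/
theorem upper_bound_t_sqrt_n (t : ℝ) (ht0 : 0 < t) (ht : t < Real.sqrt (3 + Real.sqrt 6) / 2) :
    ∃ K : ℝ, 0 < K ∧ ∃ N : ℕ, ∀ n : ℕ, N ≤ n →
      ∀ d : ℕ, ∀ C : Finset (Fin n → ZMod 2),
        (∀ x ∈ C, ∀ y ∈ C, x ≠ y → d ≤ hammingDist x y) →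
        ((n : ℝ) / 2 - t * Real.sqrt n ≤ d) →
        (C.card : ℝ) ≤ K * (n : ℝ) ^ ((7 : ℝ) / 2) := by
  classical
  have h6lb : (2.44:ℝ) ≤ Real.sqrt 6 := by
    rw [show (2.44:ℝ) = Real.sqrt (2.44^2) from (Real.sqrt_sq (by norm_num)).symm]
    exact Real.sqrt_le_sqrt (by norm_num)
  have h6ub : Real.sqrt 6 ≤ 2.4495 := by
    rw [show (2.4495:ℝ) = Real.sqrt (2.4495^2) from (Real.sqrt_sq (by norm_num)).symm]
    exact Real.sqrt_le_sqrt (by norm_num)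
  set s : ℝ := max (2*t) 2 with hsdef
  have hs2 : 2 ≤ s := le_max_right _ _
  have h2t : 2*t ≤ s := le_max_left _ _
  have hs0 : (0:ℝ) ≤ s := by linarith
  have hroot2 : Real.sqrt (3 + Real.sqrt 6) ^ 2 = 3 + Real.sqrt 6 :=
    Real.sq_sqrt (by positivity)
  have hrootnn : 0 ≤ Real.sqrt (3 + Real.sqrt 6) := Real.sqrt_nonneg _
  have hrootgt2 : 2 < Real.sqrt (3 + Real.sqrt 6) := by nlinarith
  have hslt : s < Real.sqrt (3 + Real.sqrt 6) := by
    apply max_lt (by linarith) hrootgt2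
  have hy5' : s^2 < 3 + Real.sqrt 6 := by nlinarith
  set δ : ℝ := 3 + Real.sqrt 6 - s^2 with hδdef
  have hδ : δ = 3 + Real.sqrt 6 - s^2 := hδdef
  have hδpos : 0 < δ := by rw [hδdef]; linarith
  have hδle : δ ≤ 1.45 := by rw [hδdef]; nlinarith
  have hy5 : s^2 ≤ 5.4495 := by nlinarith
  have hs234 : s ≤ 2.34 := by nlinarith
  refine ⟨1/δ, by positivity, max 9 (Nat.ceil ((100000:ℝ)/δ) + 1), ?_⟩
  intro n hn d C hC hd
  have hn9 : 9 ≤ n := le_trans (le_max_left _ _) hn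
  have hnr : (100000:ℝ)/δ ≤ (n:ℝ) := by
    have h1 : Nat.ceil ((100000:ℝ)/δ) + 1 ≤ n := le_trans (le_max_right _ _) hn
    calc (100000:ℝ)/δ ≤ (Nat.ceil ((100000:ℝ)/δ) : ℝ) := Nat.le_ceil _
    _ ≤ (n:ℝ) := by exact_mod_cast le_trans (Nat.le_succ _) h1
  set u : ℝ := Real.sqrt n with hudef
  have hu2 : u^2 = (n:ℝ) := Real.sq_sqrt (Nat.cast_nonneg n)
  have hunn : (0:ℝ) ≤ u := Real.sqrt_nonneg _
  have huδ : 100000 ≤ δ * u^2 := by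
    rw [hu2]; rw [div_le_iff₀ hδpos] at hnr; linarith
  have hu262 : (262:ℝ) ≤ u := by nlinarith
  set M : ℝ := (C.card : ℝ) with hMdef
  have hM0 : (0:ℝ) ≤ M := Nat.cast_nonneg _
  -- the distance sums
  have hTnn : ∀ k, 0 ≤ ∑ x ∈ C, ∑ y ∈ C, UBcert.es n k (fun i => UBcert.sg (x i) * UBcert.sg (y i)) :=
    fun k => UBcert.T_nonneg n k C
  have hT0 : (∑ x ∈ C, ∑ y ∈ C, UBcert.es n 0 (fun i => UBcert.sg (x i) * UBcert.sg (y i))) = M^2 := by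
    simp only [UBcert.es_zero, Finset.sum_const, nsmul_eq_mul, mul_one, hMdef]
    ring
  -- pointwise identity
  have hpoint : ∀ x ∈ C, ∀ y ∈ C,
      UBcert.c0 s u * UBcert.es n 0 (fun i => UBcert.sg (x i) * UBcert.sg (y i))
      + UBcert.c1 s u * UBcert.es n 1 (fun i => UBcert.sg (x i) * UBcert.sg (y i))
      + UBcert.c2 s u * UBcert.es n 2 (fun i => UBcert.sg (x i) * UBcert.sg (y i))
      + UBcert.c3 s u * UBcert.es n 3 (fun i => UBcert.sg (x i) * UBcert.sg (y i))
      + UBcert.c4 s u * UBcert.es n 4 (fun i => UBcert.sg (x i) * UBcert.sg (y i))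
      + UBcert.c5 s u * UBcert.es n 5 (fun i => UBcert.sg (x i) * UBcert.sg (y i))
      + UBcert.c6 s u * UBcert.es n 6 (fun i => UBcert.sg (x i) * UBcert.sg (y i))
      + UBcert.c7 s u * UBcert.es n 7 (fun i => UBcert.sg (x i) * UBcert.sg (y i))
      = (((n:ℝ) - 2*hammingDist x y) - s*u)
          * (UBcert.Rp s u ((n:ℝ) - 2*hammingDist x y))^2 := by
    intro x _ y _
    have hεpm : ∀ i, (fun i => UBcert.sg (x i) * UBcert.sg (y i)) i = 1 ∨
        (fun i => UBcert.sg (x i) * UBcert.sg (y i)) i = -1 := by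
      intro i
      rcases UBcert.sg_pm (x i) with h | h <;> rcases UBcert.sg_pm (y i) with g | g <;>
        simp [h, g]
    have hA : (∑ i, UBcert.sg (x i) * UBcert.sg (y i)) = (n:ℝ) - 2*hammingDist x y :=
      UBcert.sum_sg n x y
    obtain ⟨h2, h3, h4, h5, h6', h7⟩ := UBcert.es_forms n hn9 _ hεpm
    rw [UBcert.es_zero, UBcert.es_one, h2, h3, h4, h5, h6', h7, hA, mul_one]
    rw [show ((n:ℝ)) = u^2 from hu2.symm]
    exact UBcert.cert_identity s u _
  -- master inequality
  have master : UBcert.c0 s u * M^2 ≤ M * (36*u^14) := by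
    have lower : UBcert.c0 s u * M^2
        ≤ ∑ x ∈ C, ∑ y ∈ C,
            ((((n:ℝ) - 2*hammingDist x y) - s*u)
              * (UBcert.Rp s u ((n:ℝ) - 2*hammingDist x y))^2) := by
      have expand : ∑ x ∈ C, ∑ y ∈ C,
          ((((n:ℝ) - 2*hammingDist x y) - s*u)
            * (UBcert.Rp s u ((n:ℝ) - 2*hammingDist x y))^2)
          = UBcert.c0 s u * (∑ x ∈ C, ∑ y ∈ C, UBcert.es n 0 (fun i => UBcert.sg (x i) * UBcert.sg (y i)))
          + UBcert.c1 s u * (∑ x ∈ C, ∑ y ∈ C, UBcert.es n 1 (fun i => UBcert.sg (x i) * UBcert.sg (y i)))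
          + UBcert.c2 s u * (∑ x ∈ C, ∑ y ∈ C, UBcert.es n 2 (fun i => UBcert.sg (x i) * UBcert.sg (y i)))
          + UBcert.c3 s u * (∑ x ∈ C, ∑ y ∈ C, UBcert.es n 3 (fun i => UBcert.sg (x i) * UBcert.sg (y i)))
          + UBcert.c4 s u * (∑ x ∈ C, ∑ y ∈ C, UBcert.es n 4 (fun i => UBcert.sg (x i) * UBcert.sg (y i)))
          + UBcert.c5 s u * (∑ x ∈ C, ∑ y ∈ C, UBcert.es n 5 (fun i => UBcert.sg (x i) * UBcert.sg (y i)))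
          + UBcert.c6 s u * (∑ x ∈ C, ∑ y ∈ C, UBcert.es n 6 (fun i => UBcert.sg (x i) * UBcert.sg (y i)))
          + UBcert.c7 s u * (∑ x ∈ C, ∑ y ∈ C, UBcert.es n 7 (fun i => UBcert.sg (x i) * UBcert.sg (y i))) := by
        simp only [Finset.mul_sum, ← Finset.sum_add_distrib]
        refine Finset.sum_congr rfl fun x hx => Finset.sum_congr rfl fun y hy => ?_
        exact (hpoint x hx y hy).symm
      rw [expand, hT0]
      have t1 := mul_nonneg (UBcert.c1_nonneg hs2 hs234 hy5 hu262) (hTnn 1)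
      have t2 := mul_nonneg (UBcert.c2_nonneg hs2 hs234 hy5 hu262) (hTnn 2)
      have t3 := mul_nonneg (UBcert.c3_nonneg hs2 hs234 hy5 hu262) (hTnn 3)
      have t4 := mul_nonneg (UBcert.c4_nonneg hs2 hs234 hy5 hu262) (hTnn 4)
      have t5 := mul_nonneg (UBcert.c5_nonneg hs2 hs234 hy5 hu262) (hTnn 5)
      have t6 := mul_nonneg (UBcert.c6_nonneg hs2 hs234 hy5 hu262) (hTnn 6)
      have t7 := mul_nonneg (UBcert.c7_nonneg hs2 hs234 hy5 hu262) (hTnn 7)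
      linarith
    have upper : ∑ x ∈ C, ∑ y ∈ C,
        ((((n:ℝ) - 2*hammingDist x y) - s*u)
          * (UBcert.Rp s u ((n:ℝ) - 2*hammingDist x y))^2) ≤ M * (36*u^14) := by
      have inner : ∀ x ∈ C, ∑ y ∈ C,
          ((((n:ℝ) - 2*hammingDist x y) - s*u)
            * (UBcert.Rp s u ((n:ℝ) - 2*hammingDist x y))^2) ≤ 36*u^14 := by
        intro x hx
        rw [Finset.sum_eq_sum_sdiff_singleton_add hx]
        have offdiag : ∑ y ∈ C \ {x},
            ((((n:ℝ) - 2*hammingDist x y) - s*u)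
              * (UBcert.Rp s u ((n:ℝ) - 2*hammingDist x y))^2) ≤ 0 := by
          refine Finset.sum_nonpos fun y hy => ?_
          rw [Finset.mem_sdiff, Finset.mem_singleton] at hy
          have hxy : x ≠ y := fun h => hy.2 h.symm
          have hdle : (d:ℝ) ≤ hammingDist x y := by
            exact_mod_cast hC x hx y hy.1 hxy
          have hAle : (n:ℝ) - 2*hammingDist x y - s*u ≤ 0 := by
            have : (n:ℝ) - 2*hammingDist x y ≤ 2*t*u := by
              rw [hudef]; linarith
            nlinarith [mul_le_mul_of_nonneg_right h2t hunn]
          exact mul_nonpos_of_nonpos_of_nonneg hAle (sq_nonneg _)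
        have diag : (((n:ℝ) - 2*hammingDist x x) - s*u)
            * (UBcert.Rp s u ((n:ℝ) - 2*hammingDist x x))^2 ≤ 36*u^14 := by
          rw [hammingDist_self]
          push_cast
          rw [show ((n:ℝ) - 2*0) = u^2 by rw [← hu2]; ring]
          exact UBcert.diag_le hs2 hs234 hy5 hδ hδpos hδle hu262 huδ
        linarith
      calc ∑ x ∈ C, ∑ y ∈ C,
          ((((n:ℝ) - 2*hammingDist x y) - s*u)
            * (UBcert.Rp s u ((n:ℝ) - 2*hammingDist x y))^2)
          ≤ ∑ _x ∈ C, 36*u^14 := Finset.sum_le_sum inner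
      _ = M * (36*u^14) := by rw [Finset.sum_const, nsmul_eq_mul, hMdef]
    linarith
  -- conclude
  have hc0 : 38*δ*u^7 ≤ UBcert.c0 s u :=
    UBcert.c0_ge hs2 hs234 hy5 hδ hδpos hδle hu262 huδ
  have hrw : (n:ℝ) ^ ((7:ℝ)/2) = u^7 := by
    rw [hudef, Real.sqrt_eq_rpow,
      ← Real.rpow_natCast ((n:ℝ) ^ ((1:ℝ)/2)) 7,
      ← Real.rpow_mul (Nat.cast_nonneg n)]
    norm_num
  rw [hrw]
  rcases eq_or_lt_of_le hM0 with hMz | hMpos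
  · rw [← hMz]
    positivity
  · -- 38 δ u^7 M^2 ≤ c0 M^2 ≤ 36 M u^14
    have step1 : 38*δ*u^7 * M^2 ≤ M * (36*u^14) := by
      calc 38*δ*u^7 * M^2 ≤ UBcert.c0 s u * M^2 :=
            mul_le_mul_of_nonneg_right hc0 (sq_nonneg M)
      _ ≤ M * (36*u^14) := master
    have hu7pos : (0:ℝ) < u^7 := by positivity
    have step2 : δ * M ≤ u^7 := by
      have h38 : (0:ℝ) < 38 * u^7 * M := by positivity
      rw [← mul_le_mul_iff_right₀ h38]
      calc 38*u^7*M * (δ*M) = (38*δ*u^7) * M^2 := by ring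
      _ ≤ M * (36*u^14) := step1
      _ ≤ 38*u^7*M * u^7 := by nlinarith [hu7pos, hMpos]
    rw [div_mul_eq_mul_div, le_div_iff₀ hδpos, one_mul]
    linarith
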